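/- Fix q > 1. λ ∈ ℂ is an eigenvalue of the q-difference pencil (i.e. there is a nonzero u ∈ ℓ²(q^ℤ) solving (a(t)u^Δ)^{Δρ} + (b(t)+2λc(t)+λ²)u = 0) if and only if λ̂ = q^{-1/4}λ is an eigenvalue of the discrete pencil â_n û_{n+1} + â_{n-1}û_{n-1} + (b̂_n + 2λ̂ĉ_n + λ̂²)û_n = 0 with nonzero solution û ∈ ℓ²(ℤ), where û_n = q^{n/2}u(q^n). -/

import Mathlib

/-- The q-derivative `y^Δ(t) = (y(qt) - y(t))/((q-1)t)`. -/
noncomputable def qDeriv (q : ℝ) (y : ℝ → ℂ) (t : ℝ) : ℂ :=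
  (y (q * t) - y t) / (((q : ℂ) - 1) * (t : ℂ))

set_option maxHeartbeats 1600000 in
lemma core_eq (q : ℝ) (hq : 1 < q) (a b c : ℝ → ℂ) (lam : ℂ)
    (ahat bhat chat : ℝ → ℂ) (lamhat : ℂ)
    (hlamhat : lamhat = ((q ^ (-(1 / 4 : ℝ)) : ℝ) : ℂ) * lam)
    (hahat : ∀ t : ℝ, ahat t = a t / (((q : ℂ) - 1) ^ 2 * (t : ℂ) ^ 2))
    (hbhat : ∀ t : ℝ, bhat t = b t / (Real.sqrt q : ℂ)
      - (Real.sqrt q : ℂ) * ahat t - ahat (t / q) / (Real.sqrt q : ℂ))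
    (hchat : ∀ t : ℝ, chat t = ((q ^ (-(1 / 4 : ℝ)) : ℝ) : ℂ) * c t)
    (u : ℝ → ℂ) (w : ℤ → ℂ)
    (hw : ∀ m : ℤ, w m = ((Real.sqrt q ^ m : ℝ) : ℂ) * u ((q : ℝ) ^ m)) (n : ℤ) :
    (qDeriv q (fun s => a s * qDeriv q u s) ((q : ℝ) ^ n / q)
      + (b ((q : ℝ) ^ n) + 2 * lam * c ((q : ℝ) ^ n) + lam ^ 2) * u ((q : ℝ) ^ n) = 0) ↔
    (ahat ((q : ℝ) ^ n) * w (n + 1) + ahat ((q : ℝ) ^ (n - 1)) * w (n - 1)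
      + (bhat ((q : ℝ) ^ n) + 2 * lamhat * chat ((q : ℝ) ^ n) + lamhat ^ 2) * w n = 0) := by
  have hq0 : (0:ℝ) < q := lt_trans one_pos hq
  have hqne : q ≠ 0 := ne_of_gt hq0
  have hs0 : (0:ℝ) < Real.sqrt q := Real.sqrt_pos.mpr hq0
  have hsne : Real.sqrt q ≠ 0 := ne_of_gt hs0
  have hScne : ((Real.sqrt q : ℝ) : ℂ) ≠ 0 := by exact_mod_cast hsne
  have hQcne : ((q:ℝ) : ℂ) ≠ 0 := by exact_mod_cast hqne
  have hQ1ne : ((q:ℝ) : ℂ) - 1 ≠ 0 := by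
    intro h
    have h' : ((q:ℝ):ℂ) = 1 := sub_eq_zero.mp h
    exact absurd (by exact_mod_cast h' : q = 1) (ne_of_gt hq)
  -- real argument rewrites
  have h1 : (q:ℝ) ^ n / q = (q:ℝ) ^ (n-1) := by
    rw [zpow_sub_one₀ hqne]; ring
  have h3 : q * (q:ℝ) ^ (n-1) = (q:ℝ) ^ n := by
    rw [zpow_sub_one₀ hqne]; field_simp
  have h4 : q * (q:ℝ) ^ n = (q:ℝ) ^ (n+1) := by
    rw [zpow_add_one₀ hqne]; ring
  have hR2 : (((q ^ (-(1 / 4 : ℝ)) : ℝ) : ℂ)) ^ 2 = ((Real.sqrt q : ℝ) : ℂ)⁻¹ := by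
    have : (q ^ (-(1 / 4 : ℝ)) : ℝ) ^ 2 = (Real.sqrt q)⁻¹ := by
      rw [← Real.rpow_natCast (q ^ (-(1/4:ℝ))) 2, ← Real.rpow_mul hq0.le,
        Real.sqrt_eq_rpow, ← Real.rpow_neg hq0.le]
      norm_num
    rw [← Complex.ofReal_pow, this, Complex.ofReal_inv]
  have h5 : bhat ((q:ℝ)^n) + 2 * lamhat * chat ((q:ℝ)^n) + lamhat ^ 2
      = b ((q:ℝ)^n) * ((Real.sqrt q : ℝ) : ℂ)⁻¹ - ((Real.sqrt q : ℝ) : ℂ) * ahat ((q:ℝ)^n)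
        - ahat ((q:ℝ)^(n-1)) * ((Real.sqrt q : ℝ) : ℂ)⁻¹
        + (2 * lam * c ((q:ℝ)^n) + lam ^ 2) * ((Real.sqrt q : ℝ) : ℂ)⁻¹ := by
    rw [hbhat, hchat, hlamhat, h1]
    linear_combination (2 * lam * c ((q:ℝ)^n) + lam ^ 2) * hR2
  simp only [qDeriv, h5, hahat, hw, h1, h3, h4]
  push_cast
  have hQS : ((q:ℝ) : ℂ) = ((Real.sqrt q : ℝ) : ℂ) ^ 2 := by
    rw [← Complex.ofReal_pow, Real.sq_sqrt hq0.le]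
  set S : ℂ := ((Real.sqrt q : ℝ) : ℂ) with hSdef
  have eq1 : ((q:ℝ):ℂ) ^ n = ((q:ℝ):ℂ) ^ (n-1) * ((q:ℝ):ℂ) := by
    rw [← zpow_add_one₀ hQcne]; congr 1; ring
  have eq2 : S ^ n = S ^ (n-1) * S := by
    rw [← zpow_add_one₀ hScne]; congr 1; ring
  have eq3 : S ^ (n+1) = S ^ (n-1) * S * S := by
    rw [← zpow_add_one₀ hScne, ← zpow_add_one₀ hScne]; congr 1; ring
  rw [eq3, eq2, eq1]
  set T1 : ℂ := ((q:ℝ) : ℂ) ^ (n-1) with hT1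
  set P1 : ℂ := S ^ (n-1) with hP1
  have hT1ne : T1 ≠ 0 := zpow_ne_zero _ hQcne
  have hP1ne : P1 ≠ 0 := zpow_ne_zero _ hScne
  set A : ℂ := a ((q:ℝ)^n)
  set A' : ℂ := a ((q:ℝ)^(n-1))
  set U1 : ℂ := u ((q:ℝ)^(n+1))
  set U0 : ℂ := u ((q:ℝ)^n)
  set Um : ℂ := u ((q:ℝ)^(n-1))
  set B : ℂ := b ((q:ℝ)^n)
  set C : ℂ := c ((q:ℝ)^n)
  rw [hQS]
  have hS1 : S ^ 2 - 1 ≠ 0 := by rw [← hQS]; exact hQ1ne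
  obtain ⟨D, hDdef⟩ : ∃ D : ℂ, D = S ^ 2 - 1 := ⟨_, rfl⟩
  have hDne : D ≠ 0 := by rw [hDdef]; exact hS1
  rw [← hDdef]
  clear_value S T1 P1 A A' U1 U0 Um B C
  have key : A / (D ^ 2 * (T1 * S ^ 2) ^ 2) * (P1 * S * S * U1) + A' / (D ^ 2 * T1 ^ 2) * (P1 * Um) +
        (B * S⁻¹ - S * (A / (D ^ 2 * (T1 * S ^ 2) ^ 2)) - A' / (D ^ 2 * T1 ^ 2) * S⁻¹
          + (2 * lam * C + lam ^ 2) * S⁻¹) * (P1 * S * U0)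
      = P1 * ((A * ((U1 - U0) / (D * (T1 * S ^ 2))) - A' * ((U0 - Um) / (D * T1))) / (D * T1)
          + (B + 2 * lam * C + lam ^ 2) * U0) := by
    have iS : S * S⁻¹ = 1 := mul_inv_cancel₀ hScne
    linear_combination (S⁻¹ ^ 2 * T1⁻¹ ^ 2 * D⁻¹ ^ 2 * P1 * A * U1
      + S * S⁻¹ ^ 3 * T1⁻¹ ^ 2 * D⁻¹ ^ 2 * P1 * A * U1 + P1 * B * U0
      + (-1) * S⁻¹ ^ 2 * T1⁻¹ ^ 2 * D⁻¹ ^ 2 * P1 * A * U0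
      + (-1) * S * S⁻¹ ^ 3 * T1⁻¹ ^ 2 * D⁻¹ ^ 2 * P1 * A * U0
      + (-1) * T1⁻¹ ^ 2 * D⁻¹ ^ 2 * P1 * A' * U0
      + 2 * P1 * C * lam * U0 + P1 * lam ^ 2 * U0) * iS
  rw [key]
  constructor
  · intro h; rw [h, mul_zero]
  · intro h
    rcases mul_eq_zero.mp h with h' | h'
    · exact absurd h' hP1ne
    · exact h'

/-- `λ` is an eigenvalue of the q-difference pencil (nonzero `u ∈ ℓ²(q^ℤ)`
solving `(a u^Δ)^{Δρ} + (b + 2λc + λ²)u = 0`) iff `λ̂ = q^{-1/4}λ` is an eigenvalue of the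
discrete pencil `â_n û_{n+1} + â_{n-1}û_{n-1} + (b̂_n + 2λ̂ĉ_n + λ̂²)û_n = 0` with nonzero
`û ∈ ℓ²(ℤ)`. -/
theorem q_difference_pencil_eigenvalue_equiv
    (q : ℝ) (hq : 1 < q) (a b c : ℝ → ℂ) (lam : ℂ)
    (ahat bhat chat : ℝ → ℂ) (lamhat : ℂ)
    (hlamhat : lamhat = ((q ^ (-(1 / 4 : ℝ)) : ℝ) : ℂ) * lam)
    (hahat : ∀ t : ℝ, ahat t = a t / (((q : ℂ) - 1) ^ 2 * (t : ℂ) ^ 2))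
    (hbhat : ∀ t : ℝ, bhat t = b t / (Real.sqrt q : ℂ)
      - (Real.sqrt q : ℂ) * ahat t - ahat (t / q) / (Real.sqrt q : ℂ))
    (hchat : ∀ t : ℝ, chat t = ((q ^ (-(1 / 4 : ℝ)) : ℝ) : ℂ) * c t) :
    (∃ u : ℝ → ℂ, (∃ n : ℤ, u ((q : ℝ) ^ n) ≠ 0) ∧
        (Summable fun n : ℤ => (q : ℝ) ^ n * ‖u ((q : ℝ) ^ n)‖ ^ 2) ∧
        ∀ n : ℤ, qDeriv q (fun s => a s * qDeriv q u s) ((q : ℝ) ^ n / q)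
          + (b ((q : ℝ) ^ n) + 2 * lam * c ((q : ℝ) ^ n) + lam ^ 2) * u ((q : ℝ) ^ n) = 0) ↔
    (∃ v : ℤ → ℂ, v ≠ 0 ∧ (Summable fun n : ℤ => ‖v n‖ ^ 2) ∧
        ∀ n : ℤ, ahat ((q : ℝ) ^ n) * v (n + 1) + ahat ((q : ℝ) ^ (n - 1)) * v (n - 1)
          + (bhat ((q : ℝ) ^ n) + 2 * lamhat * chat ((q : ℝ) ^ n) + lamhat ^ 2) * v n = 0) := by
  have hq0 : (0:ℝ) < q := lt_trans one_pos hq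
  have hs0 : (0:ℝ) < Real.sqrt q := Real.sqrt_pos.mpr hq0
  have hsz : ∀ m : ℤ, (0:ℝ) < Real.sqrt q ^ m := fun m => zpow_pos hs0 m
  have hszne : ∀ m : ℤ, ((Real.sqrt q ^ m : ℝ) : ℂ) ≠ 0 := fun m => by
    exact_mod_cast ne_of_gt (hsz m)
  have hpow : ∀ m : ℤ, (Real.sqrt q ^ m) ^ 2 = q ^ m := by
    intro m
    rw [sq, ← mul_zpow, Real.mul_self_sqrt hq0.le]
  have habs : ∀ (u : ℝ → ℂ) (m : ℤ),
      ‖((Real.sqrt q ^ m : ℝ) : ℂ) * u ((q:ℝ) ^ m)‖ ^ 2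
        = q ^ m * ‖u ((q:ℝ) ^ m)‖ ^ 2 := by
    intro u m
    rw [norm_mul, Complex.norm_real, Real.norm_eq_abs, abs_of_pos (hsz m), mul_pow, hpow m]
  constructor
  · rintro ⟨u, ⟨n₀, hn₀⟩, hsum, heq⟩
    refine ⟨fun m => ((Real.sqrt q ^ m : ℝ) : ℂ) * u ((q:ℝ) ^ m), ?_, ?_, ?_⟩
    · intro h0
      have h1 := congrFun h0 n₀
      simp only [Pi.zero_apply] at h1
      rcases mul_eq_zero.mp h1 with h2 | h2
      · exact hszne n₀ h2
      · exact hn₀ h2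
    · refine hsum.congr fun m => ?_
      exact (habs u m).symm
    · intro n
      exact (core_eq q hq a b c lam ahat bhat chat lamhat hlamhat hahat hbhat hchat
        u _ (fun m => rfl) n).mp (heq n)
  · rintro ⟨v, hv0, hsum, heq⟩
    have inj : Function.Injective fun m : ℤ => (q:ℝ) ^ m :=
      zpow_right_injective₀ hq0 (ne_of_gt hq)
    classical
    set u : ℝ → ℂ := fun t =>
      if h : ∃ m : ℤ, (q:ℝ) ^ m = t then ((Real.sqrt q ^ h.choose : ℝ) : ℂ)⁻¹ * v h.choose
      else 0 with hudef
    have hu : ∀ m : ℤ, u ((q:ℝ) ^ m) = ((Real.sqrt q ^ m : ℝ) : ℂ)⁻¹ * v m := by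
      intro m
      have hex : ∃ k : ℤ, (q:ℝ) ^ k = (q:ℝ) ^ m := ⟨m, rfl⟩
      have hch : hex.choose = m := inj hex.choose_spec
      simp only [hudef]
      rw [dif_pos hex, hch]
    have hw : ∀ m : ℤ, v m = ((Real.sqrt q ^ m : ℝ) : ℂ) * u ((q:ℝ) ^ m) := by
      intro m
      rw [hu m, ← mul_assoc, mul_inv_cancel₀ (hszne m), one_mul]
    refine ⟨u, ?_, ?_, ?_⟩
    · obtain ⟨n₀, hn₀⟩ := Function.ne_iff.mp hv0
      refine ⟨n₀, fun h0 => hn₀ ?_⟩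
      have := hw n₀
      rw [h0, mul_zero] at this
      exact this
    · refine hsum.congr fun m => ?_
      rw [hw m]
      exact habs u m
    · intro n
      exact (core_eq q hq a b c lam ahat bhat chat lamhat hlamhat hahat hbhat hchat
        u v hw n).mpr (heq n)
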